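/- For n ∈ ℕ and f : ℝ → ℝ define L_n(f) := Σ_{k=1}^{n} ( f(1/k²) − f(0) ). Then: (i) (Cauchy property) for every ε > 0 there exists N such that for all m ≥ n ≥ N, sup { |L_m(f) − L_n(f)| : f : ℝ → ℝ is 1-Lipschitz and |f(0)| ≤ 1 } ≤ ε; (ii) (no limit with finite mass) there do not exist finite Borel measures ρ⁺, ρ⁻ on ℝ with finite first moments such that sup { |L_n(f) − (∫ f dρ⁺ − ∫ f dρ⁻)| : f is 1-Lipschitz and |f(0)| ≤ 1 } → 0 as n → ∞. Consequently, the space of finite signed Borel measures on ℝ with finite first moments, equipped with the Kantorovich-type norm ‖ρ‖_{W₁} = sup { |∫ f dρ| : |f(0)| ≤ 1, f 1-Lipschitz }, is not complete. -/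

import Mathlib

open MeasureTheory Filter Topology

/-- `L n f = ∑_{k=1}^{n} (f (1/k²) − f 0)`, i.e. the pairing of `f` with the signed
measure `ν_n = ∑_{k=1}^n (δ_{1/k²} − δ_0)`. -/
noncomputable def L (n : ℕ) (f : ℝ → ℝ) : ℝ :=
  ∑ k ∈ Finset.Icc 1 n, (f (1 / (k : ℝ) ^ 2) - f 0)

/-- The space of finite signed Borel measures on `ℝ` with finite first moments, with the
Kantorovich-type norm `‖ρ‖_{W₁} = sup {|∫ f dρ| : |f 0| ≤ 1, f 1-Lipschitz}`, is not
complete: the sequence `ν_n = ∑_{k=1}^n (δ_{1/k²} − δ_0)` is Cauchy for this norm but has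
no limit given by a difference of finite Borel measures with finite first moments. -/
theorem kantorovich_space_not_complete :
    -- (i) Cauchy property:
    (∀ ε > (0:ℝ), ∃ N : ℕ, ∀ m n : ℕ, N ≤ n → n ≤ m →
      ∀ f : ℝ → ℝ, LipschitzWith 1 f → |f 0| ≤ 1 → |L m f - L n f| ≤ ε) ∧
    -- (ii) no limit with finite mass and finite first moment:
    ¬ ∃ ρp ρm : Measure ℝ, IsFiniteMeasure ρp ∧ IsFiniteMeasure ρm ∧
      Integrable (fun x => |x|) ρp ∧ Integrable (fun x => |x|) ρm ∧
      ∀ ε > (0:ℝ), ∃ N : ℕ, ∀ n : ℕ, N ≤ n →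
        ∀ f : ℝ → ℝ, LipschitzWith 1 f → |f 0| ≤ 1 →
          |L n f - (∫ x, f x ∂ρp - ∫ x, f x ∂ρm)| ≤ ε := by
  constructor
  · -- (i) Cauchy property
    intro ε hε
    have hsum : Summable (fun k : ℕ => 1 / (k:ℝ)^2) :=
      Real.summable_one_div_nat_pow.mpr one_lt_two
    have hc : CauchySeq (fun n => ∑ k ∈ Finset.range n, 1/(k:ℝ)^2) :=
      hsum.hasSum.tendsto_sum_nat.cauchySeq
    obtain ⟨N, hN⟩ := Metric.cauchySeq_iff.mp hc ε hε
    refine ⟨N, fun m n hNn hnm f hf _ => ?_⟩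
    have key : L m f - L n f = ∑ k ∈ Finset.Ioc n m, (f (1/(k:ℝ)^2) - f 0) := by
      have h1 := Finset.sum_Ioc_consecutive (fun k : ℕ => f (1/(k:ℝ)^2) - f 0)
        (Nat.zero_le n) hnm
      simp only [L, ← Finset.Icc_add_one_left_eq_Ioc, Nat.succ_eq_add_one, Nat.zero_add] at *
      linarith
    rw [key]
    calc |∑ k ∈ Finset.Ioc n m, (f (1/(k:ℝ)^2) - f 0)|
        ≤ ∑ k ∈ Finset.Ioc n m, |f (1/(k:ℝ)^2) - f 0| := Finset.abs_sum_le_sum_abs _ _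
      _ ≤ ∑ k ∈ Finset.Ioc n m, 1/(k:ℝ)^2 := by
          refine Finset.sum_le_sum fun k _ => ?_
          have h := hf.dist_le_mul (1/(k:ℝ)^2) 0
          simp only [Real.dist_eq, NNReal.coe_one, one_mul, sub_zero] at h
          refine h.trans ?_
          rw [abs_of_nonneg (by positivity)]
      _ = (∑ k ∈ Finset.range (m+1), 1/(k:ℝ)^2) - ∑ k ∈ Finset.range (n+1), 1/(k:ℝ)^2 := by
          rw [← Finset.Ico_add_one_add_one_eq_Ioc, Finset.sum_Ico_eq_sub _ (Nat.add_le_add_right hnm 1)]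
      _ ≤ |(∑ k ∈ Finset.range (m+1), 1/(k:ℝ)^2) - ∑ k ∈ Finset.range (n+1), 1/(k:ℝ)^2| :=
          le_abs_self _
      _ ≤ ε := by
          have := hN (m+1) (by omega) (n+1) (by omega)
          rw [Real.dist_eq] at this
          linarith
  · -- (ii) no limit
    rintro ⟨ρp, ρm, hfp, hfm, _, _, hconv⟩
    set M := (ρp Set.univ).toReal with hM
    have hM0 : 0 ≤ M := ENNReal.toReal_nonneg
    obtain ⟨j, hj⟩ := exists_nat_gt (max 1 (2*M))
    have hj1 : (1:ℝ) ≤ j := le_of_lt (lt_of_le_of_lt (le_max_left _ _) hj)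
    have hjM : 2*M < j := lt_of_le_of_lt (le_max_right _ _) hj
    have hj0 : (0:ℝ) < j := lt_of_lt_of_le one_pos hj1
    set t : ℝ := 1/(j:ℝ)^2 with ht
    have ht0 : 0 < t := by positivity
    set f : ℝ → ℝ := fun x => max 0 (min x t) with hfdef
    have hlip : LipschitzWith 1 f := (LipschitzWith.id.min_const t).const_max 0
    have hf0 : f 0 = 0 := by simp [hfdef, min_eq_left ht0.le]
    have hfnonneg : ∀ x, 0 ≤ f x := fun x => le_max_left _ _
    have hfle : ∀ x, f x ≤ t := fun x => max_le ht0.le (min_le_right _ _)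
    obtain ⟨N, hN⟩ := hconv (1/(2*j)) (by positivity)
    set n := max N j with hn
    have hnN : N ≤ n := le_max_left _ _
    have hjn : j ≤ n := le_max_right _ _
    have hbound := hN n hnN f hlip (by rw [hf0]; simp)
    -- lower bound on L n f
    have hLlower : 1/(j:ℝ) ≤ L n f := by
      have hsub : Finset.Icc 1 j ⊆ Finset.Icc 1 n := Finset.Icc_subset_Icc_right hjn
      have h1 : ∀ k ∈ Finset.Icc 1 j, t ≤ f (1/(k:ℝ)^2) - f 0 := by
        intro k hk
        rw [hf0, sub_zero]
        obtain ⟨hk1, hkj⟩ := Finset.mem_Icc.mp hk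
        have hk0 : (0:ℝ) < k := by exact_mod_cast hk1
        have hkj' : (k:ℝ) ≤ j := by exact_mod_cast hkj
        have htle : t ≤ 1/(k:ℝ)^2 := by
          rw [ht]
          apply one_div_le_one_div_of_le (by positivity)
          exact pow_le_pow_left₀ hk0.le hkj' 2
        have : f (1/(k:ℝ)^2) = t := by
          show max 0 (min (1/(k:ℝ)^2) t) = t
          rw [min_eq_right htle, max_eq_right ht0.le]
        rw [this]
      have h2 : (j:ℝ) * t ≤ ∑ k ∈ Finset.Icc 1 j, (f (1/(k:ℝ)^2) - f 0) := by
        have := Finset.sum_le_sum h1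
        simpa [Nat.card_Icc, mul_comm] using (Finset.card_nsmul_le_sum _ _ _ h1)
      have h3 : ∑ k ∈ Finset.Icc 1 j, (f (1/(k:ℝ)^2) - f 0) ≤ L n f := by
        apply Finset.sum_le_sum_of_subset_of_nonneg hsub
        intro k _ _
        rw [hf0, sub_zero]; exact hfnonneg _
      have hjt : (j:ℝ) * t = 1/(j:ℝ) := by rw [ht]; field_simp
      linarith
    -- integrability and upper bound on the integrals
    have hcont : Continuous f := hlip.continuous
    have hintp : Integrable f ρp := by
      refine (integrable_const t).mono' hcont.aestronglyMeasurable ?_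
      filter_upwards with x
      rw [Real.norm_eq_abs, abs_of_nonneg (hfnonneg x)]; exact hfle x
    have hintm : Integrable f ρm := by
      refine (integrable_const t).mono' hcont.aestronglyMeasurable ?_
      filter_upwards with x
      rw [Real.norm_eq_abs, abs_of_nonneg (hfnonneg x)]; exact hfle x
    have hintub : ∫ x, f x ∂ρp ≤ t * M := by
      have := integral_mono hintp (integrable_const t) hfle
      rwa [integral_const, smul_eq_mul, mul_comm] at this
    have hintm0 : 0 ≤ ∫ x, f x ∂ρm := integral_nonneg hfnonneg
    have habs : L n f - (∫ x, f x ∂ρp - ∫ x, f x ∂ρm) ≤ 1/(2*j) := by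
      have := abs_le.mp hbound
      linarith [this.2]
    -- derive contradiction: 1/j ≤ t*M + 1/(2j) with t = 1/j²
    have hfinal : 1/(j:ℝ) ≤ M/(j:ℝ)^2 + 1/(2*(j:ℝ)) := by
      have : t * M = M/(j:ℝ)^2 := by rw [ht]; ring
      linarith
    have hj2 : (0:ℝ) < (j:ℝ)^2 := by positivity
    rw [div_add_div _ _ (by positivity) (by positivity), div_le_div_iff₀ hj0 (by positivity)]
      at hfinal
    nlinarith
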